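/- Induction step over sequence positions: let 1 ≤ t ≤ K and t + 1 ≤ T, and let y : Fin T → α be an initial (gold) sequence. If for every prefix (z_1,…,z_t) ∈ α^t the q^K_y-marginal probability that the first t output tokens equal (z_1,…,z_t) equals ∏_{s=1}^{t} μ(z_1,…,z_{s-1})(z_s), then for every prefix (z_1,…,z_{t+1}) ∈ α^{t+1} the q^{K+1}_y-marginal probability that the first t+1 output tokens equal (z_1,…,z_{t+1}) equals ∏_{s=1}^{t+1} μ(z_1,…,z_{s-1})(z_s). -/

import Mathlib

open scoped ENNReal BigOperators

noncomputable section

variable {α : Type*}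

/-- The list of tokens of `w` strictly before position `t` (0-indexed),
i.e. the prefix `(w_1, …, w_{t-1})` in 1-indexed notation. -/
def prefList {n : ℕ} (w : Fin n → α) (t : Fin n) : List α :=
  List.ofFn (fun s : Fin (t : ℕ) => w ⟨(s : ℕ), s.2.trans t.2⟩)

/-- The sample-decoding probability of the sequence `z`:
`P_T(z) = ∏_{t=1}^T μ(z_1,…,z_{t-1})(z_t)`. -/
def sampleDecodeProb {T : ℕ} (μ : List α → PMF α) (z : Fin T → α) : ℝ≥0∞ :=
  ∏ t : Fin T, μ (prefList z t) (z t)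

/-- The pass kernel `Q_k` (mixing probability `p = 1`): given input sequence `w`,
positions `t < k` (1-indexed) are copied from `w` deterministically, and each position
`t ≥ k` is drawn independently from `μ(w_1,…,w_{t-1})`. -/
def passKernel [Fintype α] [DecidableEq α] {T : ℕ}
    (μ : List α → PMF α) (k : ℕ) (w : Fin T → α) : PMF (Fin T → α) :=
  PMF.ofFintype
    (fun z => ∏ t : Fin T,
      if (t : ℕ) + 1 < k then (if z t = w t then 1 else 0)
      else μ (prefList w t) (z t))
    (by
      classical
      have h : ∀ t : Fin T,
          (∑ a : α, if (t : ℕ) + 1 < k then (if a = w t then (1 : ℝ≥0∞) else 0)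
            else μ (prefList w t) a) = 1 := by
        intro t
        split
        · simp
        · rw [← tsum_fintype (L := SummationFilter.unconditional _)]
          exact (μ (prefList w t)).tsum_coe
      calc
        (∑ z : Fin T → α, ∏ t : Fin T,
            if (t : ℕ) + 1 < k then (if z t = w t then (1 : ℝ≥0∞) else 0)
            else μ (prefList w t) (z t))
            = ∏ t : Fin T, ∑ a : α,
                (if (t : ℕ) + 1 < k then (if a = w t then (1 : ℝ≥0∞) else 0)
                  else μ (prefList w t) a) := by
              rw [Finset.prod_univ_sum]
              rw [Fintype.piFinset_univ]
        _ = 1 := by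
              rw [Finset.prod_congr rfl (fun t _ => h t)]
              simp)

/-- The Parallel Scheduled Sampling proposal distribution with mixing probability `p = 1`
after `K` passes, starting from the gold sequence `y`: the kernels `Q_1, …, Q_K` applied
in succession to the point mass at `y`. -/
def pssProposal [Fintype α] [DecidableEq α] {T : ℕ}
    (μ : List α → PMF α) (y : Fin T → α) : ℕ → PMF (Fin T → α)
  | 0 => PMF.pure y
  | k + 1 => (pssProposal μ y k).bind (passKernel μ (k + 1))

/-- The probability, under the distribution `q` on sequences, of the event that the
first `t` output tokens equal the prefix `z : Fin t → α`. -/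
def prefixProb {T t : ℕ} (q : PMF (Fin T → α)) (z : Fin t → α) : ℝ≥0∞ :=
  q.toOuterMeasure {w | ∀ s : Fin T, (h : (s : ℕ) < t) → w s = z ⟨(s : ℕ), h⟩}


lemma prefixProb_eq_sum {T m : ℕ} [Fintype α] [DecidableEq α] (q : PMF (Fin T → α)) (z : Fin m → α) :
    prefixProb q z = ∑ w : Fin T → α,
      if ∀ s : Fin T, (h : (s : ℕ) < m) → w s = z ⟨(s : ℕ), h⟩ then q w else 0 := by
  rw [prefixProb, PMF.toOuterMeasure_apply, tsum_fintype]
  refine Finset.sum_congr rfl fun w _ => ?_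
  simp only [Set.indicator_apply, Set.mem_setOf_eq]

lemma indicator_prefix_prod {T m : ℕ} [DecidableEq α] (z : Fin m → α) (w : Fin T → α) (P : ℝ≥0∞) :
    (if ∀ s : Fin T, (h : (s : ℕ) < m) → w s = z ⟨(s : ℕ), h⟩ then P else 0)
      = (∏ s : Fin T, if h : (s : ℕ) < m then
          (if w s = z ⟨(s : ℕ), h⟩ then 1 else 0) else 1) * P := by
  by_cases h : ∀ s : Fin T, (hs : (s : ℕ) < m) → w s = z ⟨(s : ℕ), hs⟩
  · rw [if_pos h, Finset.prod_eq_one, one_mul]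
    intro s _
    by_cases hs : (s : ℕ) < m
    · rw [dif_pos hs, if_pos (h s hs)]
    · rw [dif_neg hs]
  · rw [if_neg h]
    push_neg at h
    obtain ⟨s, hs, hne⟩ := h
    rw [Finset.prod_eq_zero (Finset.mem_univ s), zero_mul]
    rw [dif_pos hs, if_neg hne]

lemma passKernel_measure_prefix {T m k : ℕ} [Fintype α] [DecidableEq α]
    (μ : List α → PMF α) (w : Fin T → α) (z : Fin m → α) :
    (passKernel μ k w).toOuterMeasure
        {v : Fin T → α | ∀ s : Fin T, (h : (s : ℕ) < m) → v s = z ⟨(s : ℕ), h⟩}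
      = ∏ s : Fin T, ∑ a : α,
          (if h : (s : ℕ) < m then (if a = z ⟨(s : ℕ), h⟩ then 1 else 0) else 1)
            * (if (s : ℕ) + 1 < k then (if a = w s then 1 else 0)
                else μ (prefList w s) a) := by
  rw [PMF.toOuterMeasure_apply, tsum_fintype, Finset.prod_univ_sum,
    Fintype.piFinset_univ]
  refine Finset.sum_congr rfl fun v _ => ?_
  have hmem : ∀ v : Fin T → α,
      (Set.indicator {v : Fin T → α | ∀ s : Fin T, (h : (s : ℕ) < m) →
          v s = z ⟨(s : ℕ), h⟩} (passKernel μ k w) v)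
        = if ∀ s : Fin T, (h : (s : ℕ) < m) → v s = z ⟨(s : ℕ), h⟩
            then passKernel μ k w v else 0 := by
    intro v
    simp only [Set.indicator_apply, Set.mem_setOf_eq]
  rw [hmem]
  refine (indicator_prefix_prod z v (passKernel μ k w v)).trans ?_
  rw [show (passKernel μ k w v : ℝ≥0∞) = ∏ s : Fin T,
      (if (s : ℕ) + 1 < k then (if v s = w s then (1 : ℝ≥0∞) else 0)
        else μ (prefList w s) (v s)) from rfl]
  rw [← Finset.prod_mul_distrib]


lemma sum_delta_mul [Fintype α] [DecidableEq α] (c : α) (f : α → ℝ≥0∞) :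
    ∑ a : α, (if a = c then (1 : ℝ≥0∞) else 0) * f a = f c := by
  simp [ite_mul, Finset.sum_ite_eq']

lemma prefixProb_bind_of_lt {T m k : ℕ} [Fintype α] [DecidableEq α]
    (μ : List α → PMF α) (q : PMF (Fin T → α)) (z : Fin m → α) (hmk : m < k) :
    prefixProb (q.bind (passKernel μ k)) z = prefixProb q z := by
  rw [prefixProb, PMF.toOuterMeasure_bind_apply, tsum_fintype, prefixProb_eq_sum]
  refine Finset.sum_congr rfl fun w _ => ?_
  rw [passKernel_measure_prefix]
  have hfac : ∀ s : Fin T,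
      (∑ a : α, (if h : (s : ℕ) < m then (if a = z ⟨(s : ℕ), h⟩ then 1 else 0) else 1)
        * (if (s : ℕ) + 1 < k then (if a = w s then 1 else 0)
            else μ (prefList w s) a))
      = if h : (s : ℕ) < m then (if w s = z ⟨(s : ℕ), h⟩ then (1 : ℝ≥0∞) else 0)
          else 1 := by
    intro s
    by_cases hs : (s : ℕ) < m
    · have hk : (s : ℕ) + 1 < k := lt_of_le_of_lt (Nat.succ_le_of_lt hs) hmk
      have e1 : ∀ a : α,
          (if h : (s : ℕ) < m then (if a = z ⟨(s : ℕ), h⟩ then (1 : ℝ≥0∞) else 0) else 1)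
            * (if (s : ℕ) + 1 < k then (if a = w s then (1 : ℝ≥0∞) else 0)
                else μ (prefList w s) a)
          = (if a = z ⟨(s : ℕ), hs⟩ then (1 : ℝ≥0∞) else 0)
              * (if a = w s then (1 : ℝ≥0∞) else 0) := fun a => by
        rw [dif_pos hs, if_pos hk]
      rw [Finset.sum_congr rfl fun a _ => e1 a, sum_delta_mul, dif_pos hs]
      by_cases hws : w s = z ⟨(s : ℕ), hs⟩ <;> simp [hws, eq_comm]
    · rw [dif_neg hs]
      have e1 : ∀ a : α,
          (if h : (s : ℕ) < m then (if a = z ⟨(s : ℕ), h⟩ then (1 : ℝ≥0∞) else 0) else 1)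
            * (if (s : ℕ) + 1 < k then (if a = w s then (1 : ℝ≥0∞) else 0)
                else μ (prefList w s) a)
          = (if (s : ℕ) + 1 < k then (if a = w s then (1 : ℝ≥0∞) else 0)
              else μ (prefList w s) a) := fun a => by
        rw [dif_neg hs, one_mul]
      rw [Finset.sum_congr rfl fun a _ => e1 a]
      split
      · simp
      · rw [← tsum_fintype (L := SummationFilter.unconditional _)]
        exact (μ (prefList w s)).tsum_coe
  rw [Finset.prod_congr rfl fun s _ => hfac s, mul_comm,
    ← indicator_prefix_prod z w (q w)]

lemma prefixProb_pssProposal_stable {T m : ℕ} [Fintype α] [DecidableEq α]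
    (μ : List α → PMF α) (y : Fin T → α) (z : Fin m → α) :
    ∀ j, m ≤ j →
      prefixProb (pssProposal μ y j) z = prefixProb (pssProposal μ y m) z := by
  intro j
  induction j with
  | zero => intro hj; rcases Nat.le_zero.mp hj with rfl; rfl
  | succ j ihj =>
    intro hj
    rcases Nat.lt_or_ge j m with h | h
    · have hm : m = j + 1 := le_antisymm hj h
      subst hm
      rfl
    · rw [show pssProposal μ y (j + 1)
          = (pssProposal μ y j).bind (passKernel μ (j + 1)) from rfl,
        prefixProb_bind_of_lt μ _ z (Nat.lt_succ_of_le h), ihj h]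

lemma prefixProb_bind_succ {T t : ℕ} [Fintype α] [DecidableEq α] (htT : t < T)
    (μ : List α → PMF α) (q : PMF (Fin T → α)) (z : Fin (t + 1) → α) :
    prefixProb (q.bind (passKernel μ (t + 1))) z
      = prefixProb q (fun s : Fin t => z s.castSucc)
          * μ (List.ofFn (fun s : Fin t => z s.castSucc)) (z (Fin.last t)) := by
  rw [prefixProb, PMF.toOuterMeasure_bind_apply, tsum_fintype]
  have key : ∀ w : Fin T → α,
      q w * (passKernel μ (t + 1) w).toOuterMeasure
          {v : Fin T → α | ∀ s : Fin T, (h : (s : ℕ) < t + 1) → v s = z ⟨(s : ℕ), h⟩}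
        = (if ∀ s : Fin T, (h : (s : ℕ) < t) →
              w s = (fun s : Fin t => z s.castSucc) ⟨(s : ℕ), h⟩ then q w else 0)
            * μ (List.ofFn (fun s : Fin t => z s.castSucc)) (z (Fin.last t)) := by
    intro w
    rw [passKernel_measure_prefix]
    have hfac : ∀ s : Fin T,
        (∑ a : α, (if h : (s : ℕ) < t + 1 then (if a = z ⟨(s : ℕ), h⟩ then 1 else 0) else 1)
          * (if (s : ℕ) + 1 < t + 1 then (if a = w s then 1 else 0)
              else μ (prefList w s) a))
        = (if h : (s : ℕ) < t then
              (if w s = (fun s : Fin t => z s.castSucc) ⟨(s : ℕ), h⟩ then (1 : ℝ≥0∞) else 0)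
            else 1)
          * (if s = (⟨t, htT⟩ : Fin T) then μ (prefList w s) (z (Fin.last t)) else 1) := by
      intro s
      rcases Nat.lt_trichotomy (s : ℕ) t with hs | hs | hs
      · have h1 : (s : ℕ) < t + 1 := Nat.lt_succ_of_lt hs
        have hk : (s : ℕ) + 1 < t + 1 := Nat.succ_lt_succ hs
        have hne : s ≠ (⟨t, htT⟩ : Fin T) :=
          Fin.ne_of_val_ne (show (s : ℕ) ≠ t from Nat.ne_of_lt hs)
        have e1 : ∀ a : α,
            (if h : (s : ℕ) < t + 1 then (if a = z ⟨(s : ℕ), h⟩ then (1 : ℝ≥0∞) else 0) else 1)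
              * (if (s : ℕ) + 1 < t + 1 then (if a = w s then (1 : ℝ≥0∞) else 0)
                  else μ (prefList w s) a)
            = (if a = z ⟨(s : ℕ), h1⟩ then (1 : ℝ≥0∞) else 0)
                * (if a = w s then (1 : ℝ≥0∞) else 0) := fun a => by
          rw [dif_pos h1, if_pos hk]
        rw [Finset.sum_congr rfl fun a _ => e1 a, sum_delta_mul, dif_pos hs, if_neg hne,
          mul_one]
        have hzz : z ⟨(s : ℕ), h1⟩ = z (Fin.castSucc ⟨(s : ℕ), hs⟩) := by congr 1
        by_cases hws : w s = z (Fin.castSucc ⟨(s : ℕ), hs⟩) <;>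
          simp [hzz, hws, eq_comm]
      · have h1 : (s : ℕ) < t + 1 := by omega
        have hk : ¬ ((s : ℕ) + 1 < t + 1) := by omega
        have hst : ¬ ((s : ℕ) < t) := by omega
        have heq : s = (⟨t, htT⟩ : Fin T) := Fin.ext hs
        have hzz : z ⟨(s : ℕ), h1⟩ = z (Fin.last t) := by
          congr 1
          exact Fin.ext hs
        have e1 : ∀ a : α,
            (if h : (s : ℕ) < t + 1 then (if a = z ⟨(s : ℕ), h⟩ then (1 : ℝ≥0∞) else 0) else 1)
              * (if (s : ℕ) + 1 < t + 1 then (if a = w s then (1 : ℝ≥0∞) else 0)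
                  else μ (prefList w s) a)
            = (if a = z ⟨(s : ℕ), h1⟩ then (1 : ℝ≥0∞) else 0)
                * μ (prefList w s) a := fun a => by
          rw [dif_pos h1, if_neg hk]
        rw [Finset.sum_congr rfl fun a _ => e1 a, sum_delta_mul, dif_neg hst,
          if_pos heq, one_mul, hzz]
      · have h1 : ¬ ((s : ℕ) < t + 1) := by omega
        have hk : ¬ ((s : ℕ) + 1 < t + 1) := by omega
        have hst : ¬ ((s : ℕ) < t) := by omega
        have hne : s ≠ (⟨t, htT⟩ : Fin T) :=
          Fin.ne_of_val_ne (show (s : ℕ) ≠ t by omega)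
        have e1 : ∀ a : α,
            (if h : (s : ℕ) < t + 1 then (if a = z ⟨(s : ℕ), h⟩ then (1 : ℝ≥0∞) else 0) else 1)
              * (if (s : ℕ) + 1 < t + 1 then (if a = w s then (1 : ℝ≥0∞) else 0)
                  else μ (prefList w s) a)
            = μ (prefList w s) a := fun a => by
          rw [dif_neg h1, if_neg hk, one_mul]
        rw [Finset.sum_congr rfl fun a _ => e1 a, dif_neg hst, if_neg hne, mul_one,
          ← tsum_fintype (L := SummationFilter.unconditional _)]
        exact (μ (prefList w s)).tsum_coe
    rw [Finset.prod_congr rfl fun s _ => hfac s, Finset.prod_mul_distrib]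
    rw [Finset.prod_ite_eq' Finset.univ (⟨t, htT⟩ : Fin T)
      (fun s => μ (prefList w s) (z (Fin.last t)))]
    simp only [Finset.mem_univ, if_true]
    by_cases hw : ∀ s : Fin T, (h : (s : ℕ) < t) →
        w s = (fun s : Fin t => z s.castSucc) ⟨(s : ℕ), h⟩
    · have hwpref : prefList w (⟨t, htT⟩ : Fin T)
          = List.ofFn (fun s : Fin t => z s.castSucc) := by
        unfold prefList
        exact congrArg _ (funext fun j => hw ⟨(j : ℕ), (j.2).trans htT⟩ j.2)
      have hone : (∏ s : Fin T, if h : (s : ℕ) < t then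
            (if w s = (fun s : Fin t => z s.castSucc) ⟨(s : ℕ), h⟩ then (1 : ℝ≥0∞) else 0)
          else 1) = 1 := by
        refine Finset.prod_eq_one fun s _ => ?_
        by_cases hs : (s : ℕ) < t
        · rw [dif_pos hs, if_pos (hw s hs)]
        · rw [dif_neg hs]
      rw [if_pos hw, hwpref, hone, one_mul]
    · have hw' := hw
      push_neg at hw'
      obtain ⟨s, hs, hne⟩ := hw'
      have hzero : (∏ s : Fin T, if h : (s : ℕ) < t then
            (if w s = (fun s : Fin t => z s.castSucc) ⟨(s : ℕ), h⟩ then (1 : ℝ≥0∞) else 0)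
          else 1) = 0 := by
        refine Finset.prod_eq_zero (Finset.mem_univ s) ?_
        rw [dif_pos hs, if_neg hne]
      rw [if_neg hw, hzero, zero_mul, zero_mul, mul_zero]
  rw [Finset.sum_congr rfl fun w _ => key w, ← Finset.sum_mul,
    ← prefixProb_eq_sum q (fun s : Fin t => z s.castSucc)]

/-- Induction step over sequence positions: for `1 ≤ t ≤ K` and
`t + 1 ≤ T`, if the `q^K_y`-marginal of every length-`t` prefix factorizes
autoregressively, then the `q^{K+1}_y`-marginal of every length-`(t+1)` prefix
factorizes autoregressively as well. -/
theorem pss_prefix_induction_step [Fintype α] [DecidableEq α] [Nonempty α]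
    {T t K : ℕ} (hT : 0 < T) (ht : 1 ≤ t) (htK : t ≤ K) (htT : t + 1 ≤ T)
    (μ : List α → PMF α) (y : Fin T → α)
    (ih : ∀ z : Fin t → α,
      prefixProb (pssProposal μ y K) z = ∏ s : Fin t, μ (prefList z s) (z s)) :
    ∀ z : Fin (t + 1) → α,
      prefixProb (pssProposal μ y (K + 1)) z
        = ∏ s : Fin (t + 1), μ (prefList z s) (z s) := by
  intro z
  have h1 : t + 1 ≤ K + 1 := Nat.succ_le_succ htK
  rw [prefixProb_pssProposal_stable μ y z (K + 1) h1]
  rw [show pssProposal μ y (t + 1)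
      = (pssProposal μ y t).bind (passKernel μ (t + 1)) from rfl]
  rw [prefixProb_bind_succ htT μ _ z]
  rw [← prefixProb_pssProposal_stable μ y (fun s : Fin t => z s.castSucc) K htK,
    ih (fun s : Fin t => z s.castSucc)]
  rw [Fin.prod_univ_castSucc (fun s : Fin (t + 1) => μ (prefList z s) (z s))]
  rfl

end
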